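/- Let h > 0, a ∈ ℝ, and let f : ℝ → ℝ² be three times continuously differentiable on [a, a + 4h] with ‖f⁽³⁾(t)‖ ≤ M for all t ∈ [a, a + 4h]. Then ‖(f(a + 3h) − f(a + h)) − (1/2)(f(a + 4h) − f(a))‖ ≤ (5/3)·M·h³. -/

import Mathlib

open Set

/-- Cubic Taylor remainder bound to the right of the expansion point. -/
lemma cubic_right {E : Type*} [NormedAddCommGroup E] [NormedSpace ℝ E]
    {c d M : ℝ} {g g1 g2 g3 : ℝ → E}
    (hg : ∀ t ∈ Icc c d, HasDerivWithinAt g (g1 t) (Icc c d) t)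
    (hg1 : ∀ t ∈ Icc c d, HasDerivWithinAt g1 (g2 t) (Icc c d) t)
    (hg2 : ∀ t ∈ Icc c d, HasDerivWithinAt g2 (g3 t) (Icc c d) t)
    (hM : ∀ t ∈ Icc c d, ‖g3 t‖ ≤ M)
    (h0 : g c = 0) (h10 : g1 c = 0) (h20 : g2 c = 0) :
    ∀ x ∈ Icc c d, ‖g x‖ ≤ M * (x - c) ^ 3 / 6 := by
  rcases le_or_gt c d with hcd | hcd
  · -- right derivatives within Ici
    have key : ∀ (F F' : ℝ → E), (∀ t ∈ Icc c d, HasDerivWithinAt F (F' t) (Icc c d) t) →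
        ∀ x ∈ Ico c d, HasDerivWithinAt F (F' x) (Ici x) x := by
      intro F F' hF x hx
      exact (hF x (Ico_subset_Icc_self hx)).mono_of_mem_nhdsWithin
        (Icc_mem_nhdsGE_of_mem ⟨hx.1, hx.2⟩)
    have contg : ContinuousOn g (Icc c d) := fun t ht => (hg t ht).continuousWithinAt
    have contg1 : ContinuousOn g1 (Icc c d) := fun t ht => (hg1 t ht).continuousWithinAt
    have contg2 : ContinuousOn g2 (Icc c d) := fun t ht => (hg2 t ht).continuousWithinAt
    have step2 : ∀ x ∈ Icc c d, ‖g2 x‖ ≤ M * (x - c) := by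
      intro x hx
      refine image_norm_le_of_norm_deriv_right_le_deriv_boundary contg2 (key _ _ hg2)
        ?_ (B := fun t => M * (t - c)) (B' := fun _ => M) (fun t => ?_) (fun t ht => hM t (Ico_subset_Icc_self ht)) hx
      · simp [h20]
      · simpa using ((hasDerivAt_id t).sub_const c).const_mul M
    have step1 : ∀ x ∈ Icc c d, ‖g1 x‖ ≤ M * (x - c) ^ 2 / 2 := by
      intro x hx
      refine image_norm_le_of_norm_deriv_right_le_deriv_boundary contg1 (key _ _ hg1)
        ?_ (B := fun t => M * (t - c) ^ 2 / 2) (B' := fun t => M * (t - c)) (fun t => ?_) (fun t ht => step2 t (Ico_subset_Icc_self ht)) hx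
      · simp [h10]
      · have := ((((hasDerivAt_id t).sub_const c).pow 2).const_mul M).div_const 2
        simp only [id_eq] at this
        exact this.congr_deriv (by ring)
    intro x hx
    refine image_norm_le_of_norm_deriv_right_le_deriv_boundary contg (key _ _ hg)
      ?_ (B := fun t => M * (t - c) ^ 3 / 6) (B' := fun t => M * (t - c) ^ 2 / 2) (fun t => ?_) (fun t ht => step1 t (Ico_subset_Icc_self ht)) hx
    · simp [h0]
    · have := ((((hasDerivAt_id t).sub_const c).pow 3).const_mul M).div_const 6
      simp only [id_eq] at this
      exact this.congr_deriv (by ring)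
  · intro x hx
    exact absurd (hx.1.trans hx.2) (not_le.2 hcd)

/-- Cubic Taylor remainder bound to the left of the expansion point. -/
lemma cubic_left {E : Type*} [NormedAddCommGroup E] [NormedSpace ℝ E]
    {e c M : ℝ} {g g1 g2 g3 : ℝ → E}
    (hg : ∀ t ∈ Icc e c, HasDerivWithinAt g (g1 t) (Icc e c) t)
    (hg1 : ∀ t ∈ Icc e c, HasDerivWithinAt g1 (g2 t) (Icc e c) t)
    (hg2 : ∀ t ∈ Icc e c, HasDerivWithinAt g2 (g3 t) (Icc e c) t)
    (hM : ∀ t ∈ Icc e c, ‖g3 t‖ ≤ M)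
    (h0 : g c = 0) (h10 : g1 c = 0) (h20 : g2 c = 0) :
    ∀ x ∈ Icc e c, ‖g x‖ ≤ M * (c - x) ^ 3 / 6 := by
  set φ : ℝ → ℝ := fun t => 2 * c - t with hφdef
  have hmaps : MapsTo φ (Icc c (2 * c - e)) (Icc e c) := by
    intro t ht
    exact ⟨by simp only [hφdef]; linarith [ht.2], by simp only [hφdef]; linarith [ht.1]⟩
  have hφd : ∀ t, HasDerivWithinAt φ (-1) (Icc c (2 * c - e)) t := by
    intro t
    have := ((hasDerivAt_const t (2 * c)).sub (hasDerivAt_id t)).hasDerivWithinAt (s := Icc c (2 * c - e))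
    rw [zero_sub] at this
    exact this
  have comp : ∀ (F F' : ℝ → E), (∀ t ∈ Icc e c, HasDerivWithinAt F (F' t) (Icc e c) t) →
      ∀ t ∈ Icc c (2 * c - e),
        HasDerivWithinAt (F ∘ φ) (-(F' (φ t))) (Icc c (2 * c - e)) t := by
    intro F F' hF t ht
    have := HasDerivWithinAt.scomp t (hF (φ t) (hmaps ht)) (hφd t) hmaps
    simpa using this
  have hc : φ c = c := by simp [hφdef]; ring
  have main := cubic_right (M := M) (comp _ _ hg)
    (fun t ht => by have := (comp _ _ hg1 t ht).neg; rw [neg_neg] at this; exact this)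
    (fun t ht => (comp _ _ hg2 t ht))
    (fun t ht => by simpa using hM (φ t) (hmaps ht))
    (by simp [Function.comp, hc, h0]) (by simp [Function.comp, hc, h10])
    (by simp [Function.comp, hc, h20])
  intro x hx
  have hx' : 2 * c - x ∈ Icc c (2 * c - e) := ⟨by linarith [hx.2], by linarith [hx.1]⟩
  have := main (2 * c - x) hx'
  simp only [Function.comp, hφdef] at this
  have hxx : 2 * c - (2 * c - x) = x := by ring
  rw [hxx] at this
  convert this using 2
  ring

/-- Taylor estimate (equation (8) of the paper): if `f` is C³ on
`[a, a+4h]` with `‖f⁽³⁾‖ ≤ M` there, then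
`‖(f(a+3h) - f(a+h)) - (1/2)(f(a+4h) - f(a))‖ ≤ (5/3) M h³`. -/
theorem taylor_difference_bound
    (h a M : ℝ) (hh : 0 < h)
    (f f1 f2 f3 : ℝ → EuclideanSpace ℝ (Fin 2))
    (hf : ∀ t ∈ Set.Icc a (a + 4 * h), HasDerivWithinAt f (f1 t) (Set.Icc a (a + 4 * h)) t)
    (hf1 : ∀ t ∈ Set.Icc a (a + 4 * h), HasDerivWithinAt f1 (f2 t) (Set.Icc a (a + 4 * h)) t)
    (hf2 : ∀ t ∈ Set.Icc a (a + 4 * h), HasDerivWithinAt f2 (f3 t) (Set.Icc a (a + 4 * h)) t)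
    (hf3 : ContinuousOn f3 (Set.Icc a (a + 4 * h)))
    (hM : ∀ t ∈ Set.Icc a (a + 4 * h), ‖f3 t‖ ≤ M) :
    ‖(f (a + 3 * h) - f (a + h)) - (1 / 2 : ℝ) • (f (a + 4 * h) - f a)‖
      ≤ (5 / 3) * M * h ^ 3 := by
  set c : ℝ := a + 2 * h with hc
  set g : ℝ → EuclideanSpace ℝ (Fin 2) :=
    fun t => f t - f c - (t - c) • f1 c - ((t - c) ^ 2 / 2) • f2 c with hgdef
  set g1 : ℝ → EuclideanSpace ℝ (Fin 2) :=
    fun t => f1 t - f1 c - (t - c) • f2 c with hg1def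
  set g2 : ℝ → EuclideanSpace ℝ (Fin 2) := fun t => f2 t - f2 c with hg2def
  have hg : ∀ t ∈ Set.Icc a (a + 4 * h),
      HasDerivWithinAt g (g1 t) (Set.Icc a (a + 4 * h)) t := by
    intro t ht
    have hlin : HasDerivAt (fun t => (t - c) • f1 c) (f1 c) t := by
      simpa using ((hasDerivAt_id t).sub_const c).smul_const (f1 c)
    have hquad : HasDerivAt (fun t => ((t - c) ^ 2 / 2) • f2 c) ((t - c) • f2 c) t := by
      have hs : HasDerivAt (fun t => (t - c) ^ 2 / 2) (t - c) t := by
        have := (((hasDerivAt_id t).sub_const c).pow 2).div_const 2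
        simp only [id_eq] at this
        exact this.congr_deriv (by ring)
      exact hs.smul_const (f2 c)
    have := (((hf t ht).sub_const (f c)).sub hlin.hasDerivWithinAt).sub hquad.hasDerivWithinAt
    exact this
  have hg1 : ∀ t ∈ Set.Icc a (a + 4 * h),
      HasDerivWithinAt g1 (g2 t) (Set.Icc a (a + 4 * h)) t := by
    intro t ht
    have hlin : HasDerivAt (fun t => (t - c) • f2 c) (f2 c) t := by
      simpa using ((hasDerivAt_id t).sub_const c).smul_const (f2 c)
    exact ((hf1 t ht).sub_const (f1 c)).sub hlin.hasDerivWithinAt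
  have hg2 : ∀ t ∈ Set.Icc a (a + 4 * h),
      HasDerivWithinAt g2 (f3 t) (Set.Icc a (a + 4 * h)) t := by
    intro t ht
    exact (hf2 t ht).sub_const (f2 c)
  have h0 : g c = 0 := by simp [hgdef]
  have h10 : g1 c = 0 := by simp [hg1def]
  have h20 : g2 c = 0 := by simp [hg2def]
  -- restrict to subintervals
  have hsubR : Set.Icc c (a + 4 * h) ⊆ Set.Icc a (a + 4 * h) :=
    Set.Icc_subset_Icc (by simp [hc]; linarith) le_rfl
  have hsubL : Set.Icc a c ⊆ Set.Icc a (a + 4 * h) :=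
    Set.Icc_subset_Icc le_rfl (by simp [hc]; linarith)
  have bR := cubic_right (c := c) (d := a + 4 * h) (M := M)
    (fun t ht => (hg t (hsubR ht)).mono hsubR)
    (fun t ht => (hg1 t (hsubR ht)).mono hsubR)
    (fun t ht => (hg2 t (hsubR ht)).mono hsubR)
    (fun t ht => hM t (hsubR ht)) h0 h10 h20
  have bL := cubic_left (e := a) (c := c) (M := M)
    (fun t ht => (hg t (hsubL ht)).mono hsubL)
    (fun t ht => (hg1 t (hsubL ht)).mono hsubL)
    (fun t ht => (hg2 t (hsubL ht)).mono hsubL)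
    (fun t ht => hM t (hsubL ht)) h0 h10 h20
  have b3 : ‖g (a + 3 * h)‖ ≤ M * h ^ 3 / 6 := by
    have := bR (a + 3 * h) ⟨by simp [hc]; linarith, by linarith⟩
    convert this using 3
    simp [hc]; ring
  have b4 : ‖g (a + 4 * h)‖ ≤ M * (2 * h) ^ 3 / 6 := by
    have := bR (a + 4 * h) ⟨by simp [hc]; linarith, le_rfl⟩
    convert this using 3
    simp [hc]; ring
  have b1 : ‖g (a + h)‖ ≤ M * h ^ 3 / 6 := by
    have := bL (a + h) ⟨by linarith, by simp [hc]; linarith⟩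
    convert this using 3
    simp [hc]; ring
  have b0 : ‖g a‖ ≤ M * (2 * h) ^ 3 / 6 := by
    have := bL a ⟨le_rfl, by simp [hc]; linarith⟩
    convert this using 3
    simp [hc]
  -- key algebraic identity
  have key : (f (a + 3 * h) - f (a + h)) - (1 / 2 : ℝ) • (f (a + 4 * h) - f a)
      = (g (a + 3 * h) - g (a + h)) - (1 / 2 : ℝ) • (g (a + 4 * h) - g a) := by
    simp only [hgdef, hc]
    module
  rw [key]
  have nsmul : ‖(1 / 2 : ℝ) • (g (a + 4 * h) - g a)‖
      = (1 / 2) * ‖g (a + 4 * h) - g a‖ := by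
    rw [norm_smul]; simp
  calc ‖(g (a + 3 * h) - g (a + h)) - (1 / 2 : ℝ) • (g (a + 4 * h) - g a)‖
      ≤ ‖g (a + 3 * h) - g (a + h)‖ + ‖(1 / 2 : ℝ) • (g (a + 4 * h) - g a)‖ :=
        norm_sub_le _ _
    _ ≤ (‖g (a + 3 * h)‖ + ‖g (a + h)‖) + (1 / 2) * (‖g (a + 4 * h)‖ + ‖g a‖) := by
        rw [nsmul]
        have := norm_sub_le (g (a + 3 * h)) (g (a + h))
        have := norm_sub_le (g (a + 4 * h)) (g a)
        nlinarith
    _ ≤ (5 / 3) * M * h ^ 3 := by nlinarith [b0, b1, b3, b4]
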